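/- If u ≡ 0 on ℝᵈ and ρ ∇(δF/δρ) = 0 with δF/δρ = Π'(ρ) + H(x,ρ) continuous, then Π'(ρ) + H is constant on each connected component of the support of ρ. Conversely, any pair (ρ, u=0) with Π'(ρ) + H locally constant on supp(ρ) is a stationary solution of the damped hydrodynamic system. -/

import Mathlib

/-- Characterization of stationary states: with `u ≡ 0`, the stationarity condition
`ρ∇(δF/δρ) = 0` (where `δF/δρ = Pi'(ρ) + H` is differentiable and `ρ` is continuous
and nonnegative) holds if and only if `Pi'(ρ) + H` is constant on each connected
component of the support of `ρ`. -/
theorem stmt_8 (d : ℕ) (ρ H : (Fin d → ℝ) → ℝ) (dPif : ℝ → ℝ)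
    (hρc : Continuous ρ) (hρ0 : ∀ x, 0 ≤ ρ x)
    (hμ : Differentiable ℝ (fun x => dPif (ρ x) + H x)) :
    (∀ x, ρ x • fderiv ℝ (fun y => dPif (ρ y) + H y) x = 0) ↔
    (∀ x ∈ Function.support ρ, ∀ y ∈ connectedComponentIn (Function.support ρ) x,
      dPif (ρ y) + H y = dPif (ρ x) + H x) := by
  set μ : (Fin d → ℝ) → ℝ := fun y => dPif (ρ y) + H y with hμdef
  have hsupp : IsOpen (Function.support ρ) := by
    have : Function.support ρ = ρ ⁻¹' {0}ᶜ := by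
      ext z; simp [Function.support]
    rw [this]
    exact (isOpen_compl_singleton).preimage hρc
  constructor
  · intro h x hx y hy
    have hC : IsOpen (connectedComponentIn (Function.support ρ) x) :=
      hsupp.connectedComponentIn
    have hCpre : IsPreconnected (connectedComponentIn (Function.support ρ) x) :=
      isPreconnected_connectedComponentIn
    haveI : PreconnectedSpace (connectedComponentIn (Function.support ρ) x) :=
      Subtype.preconnectedSpace hCpre
    have hzero : ∀ z ∈ connectedComponentIn (Function.support ρ) x,
        fderiv ℝ μ z = 0 := by
      intro z hz
      have hzs : ρ z ≠ 0 := connectedComponentIn_subset _ _ hz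
      have := h z
      rcases smul_eq_zero.mp this with h1 | h2
      · exact absurd h1 hzs
      · exact h2
    have hlc : IsLocallyConstant
        (fun z : connectedComponentIn (Function.support ρ) x => μ z.1) := by
      rw [IsLocallyConstant.iff_exists_open]
      rintro ⟨z, hz⟩
      obtain ⟨ε, hε, hball⟩ := Metric.isOpen_iff.mp hC z hz
      refine ⟨Subtype.val ⁻¹' Metric.ball z ε,
        (Metric.isOpen_ball).preimage continuous_subtype_val,
        by simpa using hε, ?_⟩
      rintro ⟨w, hw⟩ hwball
      have hconv : Convex ℝ (Metric.ball z ε) := convex_ball z ε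
      refine hconv.is_const_of_fderivWithin_eq_zero
        (hμ.differentiableOn) ?_ hwball (Metric.mem_ball_self hε)
      intro v hv
      rw [fderivWithin_of_isOpen Metric.isOpen_ball hv]
      exact hzero v (hball hv)
    have := hlc.apply_eq_of_preconnectedSpace
      ⟨y, hy⟩ ⟨x, mem_connectedComponentIn hx⟩
    exact this
  · intro h x
    rcases eq_or_ne (ρ x) 0 with h0 | h0
    · simp [h0]
    · have hx : x ∈ Function.support ρ := h0
      have hC : connectedComponentIn (Function.support ρ) x ∈ nhds x :=
        connectedComponentIn_mem_nhds (hsupp.mem_nhds hx)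
      have hev : μ =ᶠ[nhds x] fun _ => μ x :=
        Filter.eventually_of_mem hC fun y hy => h x hx y hy
      have : fderiv ℝ μ x = fderiv ℝ (fun _ : (Fin d → ℝ) => μ x) x :=
        hev.fderiv_eq
      rw [this, fderiv_fun_const]
      simp
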